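/- Let α ∈ [0,1) ∪ [5,∞) and let C ∈ ℝ be a constant such that ∑_{n=1}^∞ |u(n) − u(n−1)|² n^α ≥ C ∑_{n=1}^∞ |u(n)|² n^{α−2} holds for every finitely supported function u : ℕ₀ → ℝ with u(0) = 0. Then C ≤ (α−1)²/4. -/

import Mathlib

open Real Finset


private lemma exp_aux (y : ℝ) (hy : 0 ≤ y) : Real.exp y ≤ 1 + y * Real.exp y := by
  have h := Real.add_one_le_exp (-y)
  have he : (0:ℝ) < Real.exp y := Real.exp_pos y
  have h2 : (-y + 1) * Real.exp y ≤ Real.exp (-y) * Real.exp y :=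
    mul_le_mul_of_nonneg_right h he.le
  rw [← Real.exp_add, neg_add_cancel, Real.exp_zero] at h2
  nlinarith

private lemma one_add_rpow_le (p x : ℝ) (hp : 0 ≤ p) (hx0 : 0 ≤ x) (hx1 : x ≤ 1) :
    (1 + x) ^ p ≤ 1 + (p * Real.exp p) * x := by
  have h1 : (1:ℝ) + x ≤ Real.exp x := by linarith [Real.add_one_le_exp x]
  have h2 : (1 + x) ^ p ≤ (Real.exp x) ^ p := Real.rpow_le_rpow (by linarith) h1 hp
  have h3 : (Real.exp x) ^ p = Real.exp (x * p) := (Real.exp_mul x p).symm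
  have h4 : Real.exp (x*p) ≤ 1 + (x*p) * Real.exp (x*p) := exp_aux _ (by positivity)
  have h5 : Real.exp (x*p) ≤ Real.exp p := Real.exp_le_exp.mpr (by nlinarith)
  have hxp : 0 ≤ x * p := by positivity
  calc (1+x)^p ≤ Real.exp (x*p) := by rw [← h3]; exact h2
    _ ≤ 1 + (x*p) * Real.exp (x*p) := h4
    _ ≤ 1 + (x*p) * Real.exp p := by nlinarith
    _ = 1 + (p * Real.exp p) * x := by ring

private lemma tangent_up (q a : ℝ) (hq0 : 0 ≤ q) (hq1 : q ≤ 1) (ha : 1 ≤ a) :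
    (a+1)^q ≤ a^q + q * a^(q-1) := by
  have ha0 : (0:ℝ) < a := by linarith
  have hb : ((1:ℝ) + 1/a) ^ q ≤ 1 + q * (1/a) :=
    rpow_one_add_le_one_add_mul_self (by
      have h : (0:ℝ) ≤ 1/a := by positivity
      linarith) hq0 hq1
  have key : (a+1)^q = a^q * (1+1/a)^q := by
    rw [← Real.mul_rpow ha0.le (by positivity)]
    congr 1
    field_simp
  calc (a+1)^q = a^q * (1+1/a)^q := key
    _ ≤ a^q * (1 + q*(1/a)) := by
        exact mul_le_mul_of_nonneg_left hb (Real.rpow_nonneg ha0.le q)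
    _ = a^q + q * a^(q-1) := by
        rw [Real.rpow_sub ha0, Real.rpow_one]; field_simp

private lemma tangent_down (q a : ℝ) (hq0 : 0 ≤ q) (hq1 : q ≤ 1) (ha : 1 ≤ a) :
    q * a^(q-1) ≤ a^q - (a-1)^q := by
  have ha0 : (0:ℝ) < a := by linarith
  have hb : ((1:ℝ) + (-(1/a))) ^ q ≤ 1 + q * (-(1/a)) := by
    apply rpow_one_add_le_one_add_mul_self _ hq0 hq1
    have : 1/a ≤ 1 := by rw [div_le_one ha0]; linarith
    linarith
  have key : (a-1)^q = a^q * (1+(-(1/a)))^q := by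
    rw [← Real.mul_rpow ha0.le]
    · congr 1; field_simp; ring
    · have : 1/a ≤ 1 := by rw [div_le_one ha0]; linarith
      linarith
  have h2 : a^q * (1+(-(1/a)))^q ≤ a^q * (1 + q*(-(1/a))) :=
    mul_le_mul_of_nonneg_left hb (Real.rpow_nonneg ha0.le q)
  have h3 : a^q * (1 + q*(-(1/a))) = a^q - q * a^(q-1) := by
    rw [Real.rpow_sub ha0, Real.rpow_one]; field_simp; ring
  rw [key] at *
  linarith [h2, h3]



private lemma diff_le (β a : ℝ) (hβ : (0 < β ∧ β ≤ 1) ∨ β ≤ -1) (ha : 1 ≤ a) :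
    |(a+1)^β - a^β| ≤ |β| * a^(β-1) := by
  have ha0 : (0:ℝ) < a := by linarith
  have ha1 : (0:ℝ) < a + 1 := by linarith
  rcases hβ with ⟨hβ0, hβ1⟩ | hβn
  · have hmono : a^β ≤ (a+1)^β := Real.rpow_le_rpow ha0.le (by linarith) hβ0.le
    rw [abs_of_nonneg (by linarith), abs_of_pos hβ0]
    have := tangent_up β a hβ0.le hβ1 ha
    linarith
  · set r := -β with hr
    have hr1 : (1:ℝ) ≤ r := by rw [hr]; linarith
    have hmono : (a+1)^β ≤ a^β := Real.rpow_le_rpow_of_nonpos ha0 (by linarith) (by linarith)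
    rw [abs_of_nonpos (by linarith), abs_of_neg (by linarith)]
    have hb : 1 + r * (-(1/(a+1))) ≤ (1 + (-(1/(a+1))))^r := by
      apply one_add_mul_self_le_rpow_one_add _ hr1
      have h : (0:ℝ) ≤ 1/(a+1) := by positivity
      have h2 : 1/(a+1) ≤ 1 := by rw [div_le_one ha1]; linarith
      linarith
    have hAB : (1 + (-(1/(a+1)))) = a/(a+1) := by field_simp; ring
    rw [hAB] at hb
    have hdiv : (a/(a+1))^r = a^r / (a+1)^r := Real.div_rpow ha0.le ha1.le r
    set A := a^r with hA
    set B := (a+1)^r with hB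
    have hApos : 0 < A := Real.rpow_pos_of_pos ha0 r
    have hBpos : 0 < B := Real.rpow_pos_of_pos ha1 r
    set B1 := (a+1)^(r-1) with hB1
    have hB1pos : 0 < B1 := Real.rpow_pos_of_pos ha1 _
    have hBB1 : B = B1 * (a+1) := by
      rw [hB, hB1, ← Real.rpow_add_one ha1.ne' (r-1)]
      ring_nf
    have hkey : B - r * B1 ≤ A := by
      have h2 := mul_le_mul_of_nonneg_right hb hBpos.le
      rw [hdiv, div_mul_cancel₀ _ hBpos.ne'] at h2
      have e : (1 + r * (-(1/(a+1)))) * B = B - r * B1 := by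
        rw [hBB1]; field_simp; ring
      rw [e] at h2
      exact h2
    have eA : a^β = A⁻¹ := by
      rw [hA, show β = -r by rw [hr, neg_neg], Real.rpow_neg ha0.le]
    have eB : (a+1)^β = B⁻¹ := by
      rw [hB, show β = -r by rw [hr, neg_neg], Real.rpow_neg ha1.le]
    have eA1 : a^(β-1) = (A*a)⁻¹ := by
      rw [hA, show β - 1 = -(r+1) by rw [hr]; ring, Real.rpow_neg ha0.le,
        Real.rpow_add_one ha0.ne']
    have hgoal : A⁻¹ - B⁻¹ ≤ r * (A*a)⁻¹ := by
      have e1 : A⁻¹ - B⁻¹ = (B-A)/(A*B) := by field_simp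
      have e2 : r * (A*a)⁻¹ = r/(A*a) := by rw [div_eq_mul_inv]
      rw [e1, e2, div_le_div_iff₀ (by positivity) (by positivity)]
      have h7 : (B - A) * (A*a) ≤ (r*B1) * (A*a) := by
        have := mul_le_mul_of_nonneg_right (show B - A ≤ r*B1 by linarith)
          (show (0:ℝ) ≤ A*a by positivity)
        linarith
      have h8 : (r*B1)*(A*a) ≤ r * (A*B) := by
        rw [hBB1]
        nlinarith [mul_pos (mul_pos (show (0:ℝ) < r by linarith) hApos) hB1pos]
      linarith
    rw [eA, eB, eA1, show -β = r from hr.symm]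
    linarith

private lemma step32 (a : ℝ) (ha : 1 ≤ a) :
    (a+1) ^ (-(3:ℝ)/2) ≤ 2 * a ^ (-(1:ℝ)/2) - 2 * (a+1) ^ (-(1:ℝ)/2) := by
  have ha0 : (0:ℝ) < a := by linarith
  have ha1 : (0:ℝ) < a + 1 := by linarith
  set s := a ^ ((1:ℝ)/2) with hsdef
  set t := (a+1) ^ ((1:ℝ)/2) with htdef
  have hs0 : 0 < s := Real.rpow_pos_of_pos ha0 _
  have ht0 : 0 < t := Real.rpow_pos_of_pos ha1 _
  have hs2 : s^2 = a := by
    rw [hsdef, ← Real.rpow_natCast (a ^ ((1:ℝ)/2)) 2, ← Real.rpow_mul ha0.le]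
    norm_num
  have ht2 : t^2 = a+1 := by
    rw [htdef, ← Real.rpow_natCast ((a+1) ^ ((1:ℝ)/2)) 2, ← Real.rpow_mul ha1.le]
    norm_num
  have hst : s ≤ t := Real.rpow_le_rpow ha0.le (by linarith) (by norm_num)
  have hs1 : 1 ≤ s := by nlinarith
  have e1 : a ^ (-(1:ℝ)/2) = s⁻¹ := by
    rw [show (-(1:ℝ)/2) = -((1:ℝ)/2) by norm_num, Real.rpow_neg ha0.le, hsdef]
  have e2 : (a+1) ^ (-(1:ℝ)/2) = t⁻¹ := by
    rw [show (-(1:ℝ)/2) = -((1:ℝ)/2) by norm_num, Real.rpow_neg ha1.le, htdef]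
  have e3 : (a+1) ^ (-(3:ℝ)/2) = (t^3)⁻¹ := by
    have h : t^3 = (a+1)^((3:ℝ)/2) := by
      rw [htdef, ← Real.rpow_natCast ((a+1) ^ ((1:ℝ)/2)) 3, ← Real.rpow_mul ha1.le]
      norm_num
    rw [show (-(3:ℝ)/2) = -((3:ℝ)/2) by norm_num, Real.rpow_neg ha1.le, h]
  rw [e1, e2, e3]
  have hts : (t - s)*(t+s) = 1 := by nlinarith
  have h4 : s*t*(t+s) ≤ 2*t^3 := by nlinarith
  have h5 : s*t ≤ 2*(t-s)*t^3 := by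
    have h6 : 2*(t-s)*t^3*(t+s) = 2*t^3 := by linear_combination 2*t^3*hts
    refine le_of_mul_le_mul_right ?_ (show (0:ℝ) < t + s by positivity)
    rw [h6]
    exact h4
  have hfin : 2 * s⁻¹ - 2 * t⁻¹ = 2*(t-s)/(s*t) := by
    field_simp
  rw [hfin, inv_eq_one_div, div_le_div_iff₀ (by positivity) (by positivity)]
  nlinarith [h5]

private lemma sum_neg32 (N : ℕ) :
    ∑ n ∈ Finset.Ico 1 N, ((n:ℝ)+1) ^ (-(3:ℝ)/2) ≤ 2 := by
  set G : ℕ → ℝ := fun k => 2 * (k:ℝ) ^ (-(1:ℝ)/2) with hG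
  have hterm : ∀ n ∈ Finset.Ico 1 N, ((n:ℝ)+1) ^ (-(3:ℝ)/2) ≤ G n - G (n+1) := by
    intro n hn
    rw [Finset.mem_Ico] at hn
    have h1 : (1:ℝ) ≤ (n:ℝ) := by exact_mod_cast hn.1
    have := step32 (n:ℝ) h1
    simp only [hG]
    push_cast
    linarith
  rcases Nat.eq_zero_or_pos N with rfl | hN1
  · simp
  have h2 : ∑ n ∈ Finset.Ico 1 N, (G n - G (n+1)) = G 1 - G N := by
    rw [Finset.sum_Ico_eq_sum_range]
    have h3 := Finset.sum_range_sub' (fun i => G (1 + i)) (N - 1)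
    simp only [Nat.add_assoc] at h3 ⊢
    rw [h3, show 1 + (N-1) = N from by omega]
  calc ∑ n ∈ Finset.Ico 1 N, ((n:ℝ)+1) ^ (-(3:ℝ)/2)
      ≤ ∑ n ∈ Finset.Ico 1 N, (G n - G (n+1)) := Finset.sum_le_sum hterm
    _ = G 1 - G N := h2
    _ ≤ 2 := by
        have hGN : 0 ≤ G N := by
          simp only [hG]
          positivity
        have hG1 : G 1 = 2 := by simp [hG]
        linarith

set_option maxHeartbeats 1000000 in
private lemma key_ineq (α β ε C : ℝ) (hα0 : 0 ≤ α)
    (hβdef : β = (1-α)/2 + ε) (hβ : (0 < β ∧ β ≤ 1) ∨ β ≤ -1)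
    (hε : 0 < ε) (hε4 : ε ≤ 1/4) (hC0 : 0 ≤ C)
    (hC : ∀ u : ℕ → ℝ, (∃ N : ℕ, ∀ n ≥ N, u n = 0) → u 0 = 0 →
      ∑' n : ℕ, |u (n + 1) - u n| ^ 2 * ((n : ℝ) + 1) ^ α ≥
        C * ∑' n : ℕ, |u (n + 1)| ^ 2 * ((n : ℝ) + 1) ^ (α - 2))
    (N : ℕ) (hN : 1 ≤ N) :
    C * (((N:ℝ) ^ (2*ε) - 1) / (2*ε)) ≤
      1 + β^2 * ((N:ℝ) ^ (2*ε)) / (2*ε)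
        + 4 * β^2 * ((2-2*β) * Real.exp (2-2*β)) + 2^α * (N:ℝ) ^ (2*ε) := by
  have hβ1 : β ≤ 1 := by rcases hβ with ⟨_, h⟩ | h <;> linarith
  have hβne : β ≠ 0 := by
    rcases hβ with ⟨h, _⟩ | h
    · exact ne_of_gt h
    · exact ne_of_lt (by linarith)
  set q : ℝ := 2*ε with hq
  have hq0 : 0 < q := by positivity
  have hq1 : q ≤ 1 := by rw [hq]; linarith
  set p : ℝ := 2 - 2*β with hp
  have hp0 : 0 ≤ p := by rw [hp]; linarith
  set K : ℝ := p * Real.exp p with hK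
  have hK0 : 0 ≤ K := by positivity
  have hexp1 : q - 1 = 2*β + α - 2 := by rw [hq, hβdef]; ring
  have hN1 : (1:ℝ) ≤ (N:ℝ) := by exact_mod_cast hN
  have hN0 : (0:ℝ) < (N:ℝ) := by linarith
  set u : ℕ → ℝ := fun n => if n ≤ N then (n:ℝ)^β
    else if n ≤ 2*N then (N:ℝ)^β * (2 - (n:ℝ)/(N:ℝ)) else 0 with hu
  have huval1 : ∀ n : ℕ, n ≤ N → u n = (n:ℝ)^β := by
    intro n h; simp only [hu]; rw [if_pos h]
  have huval2 : ∀ n : ℕ, N ≤ n → n ≤ 2*N → u n = (N:ℝ)^β * (2 - (n:ℝ)/(N:ℝ)) := by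
    intro n h1 h2
    by_cases h : n ≤ N
    · have h3 : n = N := le_antisymm h h1
      subst h3
      rw [huval1 n le_rfl, div_self hN0.ne']
      ring
    · simp only [hu]; rw [if_neg h, if_pos h2]
  have huzero : ∀ n : ℕ, 2*N ≤ n → u n = 0 := by
    intro n h
    by_cases h2 : n ≤ 2*N
    · have h3 : n = 2*N := le_antisymm h2 h
      subst h3
      rw [huval2 (2*N) (by omega) le_rfl]
      have e : ((2*N : ℕ):ℝ) = 2*(N:ℝ) := by push_cast; ring
      rw [e, mul_div_assoc, div_self hN0.ne']
      ring
    · have hnN : ¬ n ≤ N := by omega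
      simp only [hu]; rw [if_neg hnN, if_neg h2]
  have hu0 : u 0 = 0 := by
    rw [huval1 0 (Nat.zero_le N)]
    rw [Nat.cast_zero]
    exact Real.zero_rpow hβne
  have hmain := hC u ⟨2*N, fun n h => huzero n h⟩ hu0
  have ht1 : ∑' n : ℕ, |u (n + 1) - u n| ^ 2 * ((n : ℝ) + 1) ^ α
      = ∑ n ∈ range (2*N), |u (n + 1) - u n| ^ 2 * ((n : ℝ) + 1) ^ α := by
    apply tsum_eq_sum
    intro b hb
    rw [Finset.mem_range, not_lt] at hb
    rw [huzero (b+1) (by omega), huzero b hb]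
    simp
  have ht2 : ∑' n : ℕ, |u (n + 1)| ^ 2 * ((n : ℝ) + 1) ^ (α-2)
      = ∑ n ∈ range (2*N), |u (n + 1)| ^ 2 * ((n : ℝ) + 1) ^ (α-2) := by
    apply tsum_eq_sum
    intro b hb
    rw [Finset.mem_range, not_lt] at hb
    rw [huzero (b+1) (by omega)]
    simp
  rw [ht1, ht2] at hmain
  -- denominator bounds
  have hden1 : ∑ n ∈ range N, ((n:ℝ)+1)^(q-1)
      ≤ ∑ n ∈ range (2*N), |u (n + 1)| ^ 2 * ((n : ℝ) + 1) ^ (α-2) := by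
    have e : ∀ n ∈ range N, ((n:ℝ)+1)^(q-1) = |u (n + 1)| ^ 2 * ((n : ℝ) + 1) ^ (α-2) := by
      intro n hn
      rw [Finset.mem_range] at hn
      have h1 : u (n+1) = ((n:ℝ)+1)^β := by
        rw [huval1 (n+1) (by omega)]; push_cast; ring_nf
      have hc : (0:ℝ) < (n:ℝ)+1 := by positivity
      rw [h1, sq_abs, ← Real.rpow_natCast (((n:ℝ)+1)^β) 2, ← Real.rpow_mul hc.le,
        ← Real.rpow_add hc]
      congr 1
      rw [hexp1]; ring
    rw [Finset.sum_congr rfl e]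
    apply Finset.sum_le_sum_of_subset_of_nonneg (Finset.range_subset_range.mpr (by omega))
    intro i _ _
    positivity
  have hden2 : ((N:ℝ)^q - 1)/q ≤ ∑ n ∈ range N, ((n:ℝ)+1)^(q-1) := by
    set F : ℕ → ℝ := fun k => ((k:ℝ)+1)^q with hF
    have htel : ∑ n ∈ range N, (F (n+1) - F n) = F N - F 0 := Finset.sum_range_sub F N
    have hsum : F N - F 0 ≤ q * ∑ n ∈ range N, ((n:ℝ)+1)^(q-1) := by
      rw [← htel, Finset.mul_sum]
      apply Finset.sum_le_sum
      intro n _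
      have hcast : F (n+1) = (((n:ℝ)+1)+1)^q := by simp only [hF]; push_cast; ring_nf
      have h1 : (1:ℝ) ≤ (n:ℝ)+1 := by
        have h0 : (0:ℝ) ≤ (n:ℝ) := Nat.cast_nonneg n
        linarith
      have := tangent_up q ((n:ℝ)+1) hq0.le hq1 h1
      rw [hcast]
      simp only [hF]
      linarith
    have h1 : (N:ℝ)^q ≤ ((N:ℝ)+1)^q := Real.rpow_le_rpow hN0.le (by linarith) hq0.le
    have h2 : F 0 = 1 := by simp only [hF]; norm_num
    have h3 : F N = ((N:ℝ)+1)^q := rfl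
    rw [div_le_iff₀ hq0]
    nlinarith
  -- numerator bound
  have hnum : ∑ n ∈ range (2*N), |u (n + 1) - u n| ^ 2 * ((n : ℝ) + 1) ^ α
      ≤ 1 + β^2 * (((N:ℝ)^q - 1)/q) + 4*β^2*K + 2^α * (N:ℝ)^q := by
    rw [Finset.range_eq_Ico, ← Finset.sum_Ico_consecutive _ (Nat.zero_le N) (by omega : N ≤ 2*N)]
    have hA : ∑ n ∈ Finset.Ico 0 N, |u (n + 1) - u n| ^ 2 * ((n : ℝ) + 1) ^ α
        ≤ 1 + β^2 * (((N:ℝ)^q - 1)/q) + 4*β^2*K := by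
      rw [Finset.sum_eq_sum_Ico_succ_bot (by omega : 0 < N)]
      simp only [Nat.cast_zero, zero_add, Real.one_rpow, mul_one]
      have hterm0 : |u 1 - u 0| ^ 2 = 1 := by
        rw [huval1 1 hN, hu0, Nat.cast_one, Real.one_rpow]
        norm_num
      set Fq : ℕ → ℝ := fun k => (k:ℝ)^q with hFq
      have htel : ∑ n ∈ Finset.Ico 1 N, (Fq (n+1) - Fq n) = Fq N - Fq 1 := by
        have t1 : ∑ n ∈ range N, (Fq (n+1) - Fq n) = Fq N - Fq 0 := Finset.sum_range_sub Fq N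
        rw [Finset.range_eq_Ico, Finset.sum_eq_sum_Ico_succ_bot (by omega : 0 < N)] at t1
        linarith [t1]
      have hFq0 : Fq 0 = 0 := by simp only [hFq]; norm_num [Real.zero_rpow hq0.ne']
      have hFq1 : Fq 1 = 1 := by simp only [hFq]; norm_num
      have hFqN : Fq N = (N:ℝ)^q := rfl
      have hterm : ∀ n ∈ Finset.Ico 1 N,
          |u (n + 1) - u n| ^ 2 * ((n : ℝ) + 1) ^ α
            ≤ β^2/q * (Fq (n+1) - Fq n) + 2*β^2*K*((n:ℝ)+1)^(-(3:ℝ)/2) := by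
        intro n hn
        rw [Finset.mem_Ico] at hn
        have ha : (1:ℝ) ≤ (n:ℝ) := by exact_mod_cast hn.1
        have ha0 : (0:ℝ) < (n:ℝ) := by linarith
        have ha1 : (0:ℝ) < (n:ℝ)+1 := by linarith
        have hv1 : u n = ((n:ℝ))^β := huval1 n (by omega)
        have hv2 : u (n+1) = ((n:ℝ)+1)^β := by
          rw [huval1 (n+1) (by omega)]; push_cast; ring_nf
        rw [hv1, hv2]
        have h1 := diff_le β (n:ℝ) hβ ha
        have hsq : |((n:ℝ)+1)^β - ((n:ℝ))^β|^2 ≤ (|β| * ((n:ℝ))^(β-1))^2 :=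
          pow_le_pow_left₀ (abs_nonneg _) h1 2
        have hsq2 : (|β| * ((n:ℝ))^(β-1))^2 = β^2 * ((n:ℝ))^((β-1)*2) := by
          rw [mul_pow, sq_abs, ← Real.rpow_natCast (((n:ℝ))^(β-1)) 2,
            ← Real.rpow_mul ha0.le]
          norm_num
        have hstep1 : |((n:ℝ)+1)^β - ((n:ℝ))^β|^2 * ((n:ℝ)+1)^α
            ≤ β^2 * (((n:ℝ))^((β-1)*2) * ((n:ℝ)+1)^α) := by
          have := mul_le_mul_of_nonneg_right (hsq.trans_eq hsq2)
            (Real.rpow_nonneg ha1.le α)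
          linarith [this]
        have hkey2 : ((n:ℝ))^((β-1)*2) * ((n:ℝ)+1)^α
            ≤ ((n:ℝ)+1)^(q-1) + 2*K*((n:ℝ)+1)^(-(3:ℝ)/2) := by
          set a : ℝ := (n:ℝ)
          have e0 : a^((β-1)*2) * (a+1)^α = (a+1)^(q-1) * ((1+1/a))^p := by
            have e1 : (1:ℝ)+1/a = (a+1)/a := by field_simp
            rw [e1, Real.div_rpow (by linarith : (0:ℝ) ≤ a+1) ha0.le p,
              show (β-1)*2 = -p by rw [hp]; ring,
              Real.rpow_neg ha0.le,
              show q-1 = α - p by rw [hexp1, hp]; ring,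
              Real.rpow_sub ha1]
            have hap : (0:ℝ) < a^p := Real.rpow_pos_of_pos ha0 p
            have hap1 : (0:ℝ) < (a+1)^p := Real.rpow_pos_of_pos ha1 p
            field_simp
            try ring
          have e2 : ((1:ℝ)+1/a)^p ≤ 1 + K*(1/a) := by
            have := one_add_rpow_le p (1/a) hp0 (by positivity)
              (by rw [div_le_one ha0]; linarith)
            rw [hK]
            linarith
          have e4 : (a+1)^(q-1)/a ≤ 2*(a+1)^(-(3:ℝ)/2) := by
            have hr1 : (0:ℝ) ≤ (a+1)^(q-1) := Real.rpow_nonneg ha1.le _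
            have f1 : (a+1)^(q-1)/a ≤ (a+1)^(q-1) * (2/(a+1)) := by
              rw [div_eq_mul_inv]
              apply mul_le_mul_of_nonneg_left _ hr1
              rw [inv_eq_one_div, div_le_div_iff₀ ha0 ha1]
              linarith
            have f2 : (a+1)^(q-1) * (2/(a+1)) = 2 * (a+1)^(q-1-1) := by
              rw [Real.rpow_sub ha1 (q-1) 1, Real.rpow_one]
              ring
            have f3 : (a+1)^(q-1-1) ≤ (a+1)^(-(3:ℝ)/2) := by
              apply Real.rpow_le_rpow_of_exponent_le (by linarith)
              rw [hq] at hq1 ⊢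
              linarith
            calc (a+1)^(q-1)/a ≤ (a+1)^(q-1) * (2/(a+1)) := f1
              _ = 2 * (a+1)^(q-1-1) := f2
              _ ≤ 2*(a+1)^(-(3:ℝ)/2) := by linarith
          have hr1 : (0:ℝ) ≤ (a+1)^(q-1) := Real.rpow_nonneg ha1.le _
          calc a^((β-1)*2) * (a+1)^α = (a+1)^(q-1) * ((1+1/a))^p := e0
            _ ≤ (a+1)^(q-1) * (1 + K*(1/a)) := mul_le_mul_of_nonneg_left e2 hr1
            _ = (a+1)^(q-1) + K * ((a+1)^(q-1)/a) := by ring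
            _ ≤ (a+1)^(q-1) + K * (2*(a+1)^(-(3:ℝ)/2)) := by
                have := mul_le_mul_of_nonneg_left e4 hK0
                linarith
            _ = (a+1)^(q-1) + 2*K*(a+1)^(-(3:ℝ)/2) := by ring
        have hfin1 : ((n:ℝ)+1)^(q-1) ≤ (Fq (n+1) - Fq n)/q := by
          have := tangent_down q ((n:ℝ)+1) hq0.le hq1 (by linarith)
          have hc : Fq (n+1) = ((n:ℝ)+1)^q := by
            simp only [hFq]; push_cast; ring_nf
          have hc2 : Fq n = ((n:ℝ))^q := rfl
          rw [le_div_iff₀ hq0, hc, hc2]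
          have e : ((n:ℝ)+1) - 1 = (n:ℝ) := by ring
          rw [e] at this
          linarith
        have hb2 : (0:ℝ) ≤ β^2 := sq_nonneg β
        have hneg32 : (0:ℝ) ≤ ((n:ℝ)+1)^(-(3:ℝ)/2) := Real.rpow_nonneg ha1.le _
        calc |((n:ℝ)+1)^β - ((n:ℝ))^β|^2 * ((n:ℝ)+1)^α
            ≤ β^2 * (((n:ℝ))^((β-1)*2) * ((n:ℝ)+1)^α) := hstep1
          _ ≤ β^2 * (((n:ℝ)+1)^(q-1) + 2*K*((n:ℝ)+1)^(-(3:ℝ)/2)) := by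
              apply mul_le_mul_of_nonneg_left hkey2 hb2
          _ ≤ β^2 * ((Fq (n+1) - Fq n)/q + 2*K*((n:ℝ)+1)^(-(3:ℝ)/2)) := by
              apply mul_le_mul_of_nonneg_left _ hb2
              linarith
          _ = β^2/q * (Fq (n+1) - Fq n) + 2*β^2*K*((n:ℝ)+1)^(-(3:ℝ)/2) := by ring
      have hsum1 : ∑ n ∈ Finset.Ico 1 N, |u (n + 1) - u n| ^ 2 * ((n : ℝ) + 1) ^ α
          ≤ β^2/q * ((N:ℝ)^q - 1) + 4*β^2*K := by
        calc ∑ n ∈ Finset.Ico 1 N, |u (n + 1) - u n| ^ 2 * ((n : ℝ) + 1) ^ α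
            ≤ ∑ n ∈ Finset.Ico 1 N,
              (β^2/q * (Fq (n+1) - Fq n) + 2*β^2*K*((n:ℝ)+1)^(-(3:ℝ)/2)) :=
              Finset.sum_le_sum hterm
          _ = β^2/q * (∑ n ∈ Finset.Ico 1 N, (Fq (n+1) - Fq n))
              + 2*β^2*K * ∑ n ∈ Finset.Ico 1 N, ((n:ℝ)+1)^(-(3:ℝ)/2) := by
              rw [Finset.sum_add_distrib, Finset.mul_sum, Finset.mul_sum]
          _ ≤ β^2/q * ((N:ℝ)^q - 1) + 2*β^2*K * 2 := by
              have hc1 : (0:ℝ) ≤ β^2/q := by positivity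
              have hc2 : (0:ℝ) ≤ 2*β^2*K := by positivity
              have h5 := sum_neg32 N
              rw [htel, hFqN, hFq1]
              have := mul_le_mul_of_nonneg_left h5 hc2
              linarith
          _ = β^2/q * ((N:ℝ)^q - 1) + 4*β^2*K := by ring
      have e : β^2/q * ((N:ℝ)^q - 1) = β^2 * (((N:ℝ)^q - 1)/q) := by ring
      linarith [hsum1, hterm0]
    have hB : ∑ n ∈ Finset.Ico N (2*N), |u (n + 1) - u n| ^ 2 * ((n : ℝ) + 1) ^ α
        ≤ 2^α * (N:ℝ)^q := by
      have hBterm : ∀ n ∈ Finset.Ico N (2*N),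
          |u (n + 1) - u n| ^ 2 * ((n : ℝ) + 1) ^ α
            ≤ ((N:ℝ)^β/(N:ℝ))^2 * (2*(N:ℝ))^α := by
        intro n hn
        rw [Finset.mem_Ico] at hn
        have hv1 : u n = (N:ℝ)^β * (2 - (n:ℝ)/(N:ℝ)) := huval2 n hn.1 (by omega)
        have hv2 : u (n+1) = (N:ℝ)^β * (2 - ((n:ℝ)+1)/(N:ℝ)) := by
          rw [huval2 (n+1) (by omega) (by omega)]; push_cast; ring_nf
        have hdiff : u (n+1) - u n = -((N:ℝ)^β/(N:ℝ)) := by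
          rw [hv1, hv2]
          field_simp
          ring
        rw [hdiff, abs_neg, abs_of_pos (div_pos (Real.rpow_pos_of_pos hN0 β) hN0)]
        apply mul_le_mul_of_nonneg_left _ (by positivity)
        apply Real.rpow_le_rpow (by positivity) _ hα0
        have : (n:ℝ) + 1 ≤ 2*(N:ℝ) := by
          have : n + 1 ≤ 2*N := by omega
          exact_mod_cast this
        linarith
      have hcard : ∑ n ∈ Finset.Ico N (2*N), (((N:ℝ)^β/(N:ℝ))^2 * (2*(N:ℝ))^α)
          = (N:ℝ) * (((N:ℝ)^β/(N:ℝ))^2 * (2*(N:ℝ))^α) := by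
        rw [Finset.sum_const, Nat.card_Ico]
        rw [show 2*N - N = N from by omega]
        rw [nsmul_eq_mul]
      have hE : (N:ℝ) * (((N:ℝ)^β/(N:ℝ))^2 * (2*(N:ℝ))^α) = 2^α * (N:ℝ)^q := by
        have e1 : ((N:ℝ)^β)^2 = (N:ℝ)^(β*2) := by
          rw [← Real.rpow_natCast ((N:ℝ)^β) 2, ← Real.rpow_mul hN0.le]
          norm_num
        have e2 : (2*(N:ℝ))^α = 2^α * (N:ℝ)^α := Real.mul_rpow (by norm_num) hN0.le
        have e3 : (N:ℝ)^(β*2) * (N:ℝ)^α = (N:ℝ)^(β*2+α) := (Real.rpow_add hN0 _ _).symm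
        have e4 : (N:ℝ)^(β*2+α) = (N:ℝ)^q * (N:ℝ) := by
          rw [show β*2+α = q + 1 by rw [hq, hβdef]; ring, Real.rpow_add hN0, Real.rpow_one]
        calc (N:ℝ) * (((N:ℝ)^β/(N:ℝ))^2 * (2*(N:ℝ))^α)
            = 2^α * ((N:ℝ)^(β*2) * (N:ℝ)^α) * ((N:ℝ) / ((N:ℝ)*(N:ℝ))) := by
              rw [div_pow, e1, e2]; ring
          _ = 2^α * ((N:ℝ)^(β*2+α)) * ((N:ℝ) / ((N:ℝ)*(N:ℝ))) := by rw [e3]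
          _ = 2^α * ((N:ℝ)^q * (N:ℝ)) * ((N:ℝ) / ((N:ℝ)*(N:ℝ))) := by rw [e4]
          _ = 2^α * (N:ℝ)^q := by field_simp
      calc ∑ n ∈ Finset.Ico N (2*N), |u (n + 1) - u n| ^ 2 * ((n : ℝ) + 1) ^ α
          ≤ ∑ n ∈ Finset.Ico N (2*N), (((N:ℝ)^β/(N:ℝ))^2 * (2*(N:ℝ))^α) :=
            Finset.sum_le_sum hBterm
        _ = (N:ℝ) * (((N:ℝ)^β/(N:ℝ))^2 * (2*(N:ℝ))^α) := hcard
        _ = 2^α * (N:ℝ)^q := hE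
    linarith [hA, hB]
  -- conclusion
  have hd1 : C * (((N:ℝ)^q - 1)/q)
      ≤ C * ∑ n ∈ range (2*N), |u (n + 1)| ^ 2 * ((n : ℝ) + 1) ^ (α-2) :=
    mul_le_mul_of_nonneg_left (hden2.trans hden1) hC0
  have hlast : β^2 * (((N:ℝ)^q - 1)/q) ≤ β^2 * ((N:ℝ)^q) / q := by
    have h1 : ((N:ℝ)^q - 1)/q ≤ (N:ℝ)^q/q := by
      rw [div_le_div_iff₀ hq0 hq0]
      nlinarith [hq0.le]
    calc β^2 * (((N:ℝ)^q - 1)/q) ≤ β^2 * ((N:ℝ)^q/q) :=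
        mul_le_mul_of_nonneg_left h1 (sq_nonneg β)
      _ = β^2 * ((N:ℝ)^q) / q := by ring
  linarith [hmain, hnum, hd1, hlast]

set_option maxHeartbeats 1000000 in
/-- Sharpness of the constant in Corollary 2.3. -/
theorem discrete_weighted_hardy_power_weight_sharp (α : ℝ)
    (hα : α ∈ Set.Ico (0 : ℝ) 1 ∪ Set.Ici (5 : ℝ)) (C : ℝ)
    (hC : ∀ u : ℕ → ℝ, (∃ N : ℕ, ∀ n ≥ N, u n = 0) → u 0 = 0 →
      ∑' n : ℕ, |u (n + 1) - u n| ^ 2 * ((n : ℝ) + 1) ^ α ≥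
        C * ∑' n : ℕ, |u (n + 1)| ^ 2 * ((n : ℝ) + 1) ^ (α - 2)) :
    C ≤ (α - 1) ^ 2 / 4 := by
  have hα0 : 0 ≤ α := by
    rcases hα with h | h
    · exact h.1
    · have := Set.mem_Ici.mp h; linarith
  rcases le_or_gt C 0 with hC0 | hC0
  · have : (0:ℝ) ≤ (α-1)^2/4 := by positivity
    linarith
  by_contra hcon
  push_neg at hcon
  have stepA : ∀ ε : ℝ, 0 < ε → ε ≤ 1/4 → C ≤ ((1-α)/2 + ε)^2 + 2^α * (2*ε) + ε := by
    intro ε hε hε4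
    set β := (1-α)/2 + ε with hβdef
    have hβ : (0 < β ∧ β ≤ 1) ∨ β ≤ -1 := by
      rcases hα with h | h
      · rw [Set.mem_Ico] at h
        left
        constructor
        · rw [hβdef]; linarith [h.2]
        · rw [hβdef]; linarith [h.1]
      · rw [Set.mem_Ici] at h
        right
        rw [hβdef]; linarith
    set q := 2*ε with hqdef
    have hq0 : (0:ℝ) < q := by rw [hqdef]; linarith
    have hp0 : (0:ℝ) ≤ 2-2*β := by rcases hβ with ⟨_,h⟩|h <;> linarith
    set K := (2-2*β) * Real.exp (2-2*β) with hKdef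
    have hK0 : 0 ≤ K := by
      rw [hKdef]
      positivity
    by_contra hA
    push_neg at hA
    set R0 := q + β^2 + 4*β^2*K*q + 2^α*q with hR0def
    have h2α : (0:ℝ) < 2^α := by positivity
    have hR00 : 0 < R0 := by rw [hR0def]; positivity
    obtain ⟨n0, hn0⟩ := exists_nat_ge ((1 + R0/ε) ^ (1/q))
    set N := max n0 1 with hNdef
    have hN1 : 1 ≤ N := le_max_right _ _
    have hx0 : (0:ℝ) < 1 + R0/ε := by positivity
    have hNq : 1 + R0/ε ≤ (N:ℝ)^q := by
      have h1 : ((1 + R0/ε) ^ (1/q)) ≤ (N:ℝ) := by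
        calc ((1 + R0/ε) ^ (1/q)) ≤ (n0:ℝ) := hn0
          _ ≤ (N:ℝ) := by exact_mod_cast le_max_left n0 1
      have h2 : (((1 + R0/ε)^(1/q)))^q ≤ (N:ℝ)^q :=
        Real.rpow_le_rpow (Real.rpow_nonneg hx0.le _) h1 hq0.le
      rw [← Real.rpow_mul hx0.le, one_div, inv_mul_cancel₀ hq0.ne', Real.rpow_one] at h2
      exact h2
    have hkey := key_ineq α β ε C hα0 hβdef hβ hε hε4 hC0.le hC N hN1
    rw [← hqdef, ← hKdef] at hkey
    set x := (N:ℝ)^q with hx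
    have hx1 : 1 + R0/ε ≤ x := hNq
    have h3 : C * (x - 1) ≤ q + β^2*x + 4*β^2*K*q + 2^α*x*q := by
      have h := mul_le_mul_of_nonneg_right hkey hq0.le
      calc C*(x-1) = C*((x-1)/q)*q := by field_simp
        _ ≤ (1 + β^2*x/q + 4*β^2*K + 2^α*x)*q := h
        _ = q + β^2*x + 4*β^2*K*q + 2^α*x*q := by field_simp; try ring
    have h4 : (C - β^2 - 2^α*q) * (x-1) ≤ R0 := by
      rw [hR0def]; nlinarith [h3]
    have h5 : ε < C - β^2 - 2^α*q := by linarith [hA]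
    have h6 : (0:ℝ) < x - 1 := by
      have : 0 < R0/ε := by positivity
      linarith
    have h8 : R0 ≤ ε * (x - 1) := by
      have h9 : R0/ε ≤ x - 1 := by linarith
      have := mul_le_mul_of_nonneg_left h9 hε.le
      rw [mul_div_cancel₀] at this
      · linarith
      · exact hε.ne'
    have h10 : ε * (x-1) < (C - β^2 - 2^α*q) * (x-1) := mul_lt_mul_of_pos_right h5 h6
    linarith [h4, h8, h10]
  -- Step B
  set M := |1-α| + 2 + 2*(2:ℝ)^α with hM
  have h2α : (0:ℝ) < 2^α := by positivity
  have hM0 : 0 < M := by rw [hM]; positivity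
  set d := C - (α-1)^2/4 with hd
  have hd0 : 0 < d := by rw [hd]; linarith
  set ε := min (1/4) (d/(2*M)) with hε
  have hε0 : 0 < ε := by
    apply lt_min
    · norm_num
    · positivity
  have hε4 : ε ≤ 1/4 := min_le_left _ _
  have h := stepA ε hε0 hε4
  have hεM : ε*M ≤ d/2 := by
    have h1 : ε ≤ d/(2*M) := min_le_right _ _
    calc ε*M ≤ (d/(2*M))*M := mul_le_mul_of_nonneg_right h1 hM0.le
      _ = d/2 := by field_simp
  have habs : (1-α) ≤ |1-α| := le_abs_self _
  have hsq : ((1-α)/2 + ε)^2 ≤ (α-1)^2/4 + ε*|1-α| + ε := by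
    have e : ((1-α)/2 + ε)^2 = (α-1)^2/4 + ε*(1-α) + ε^2 := by ring
    have h2 : ε^2 ≤ ε := by nlinarith
    nlinarith [mul_le_mul_of_nonneg_left habs hε0.le]
  have hfin : C ≤ (α-1)^2/4 + ε*M := by
    calc C ≤ ((1-α)/2 + ε)^2 + 2^α*(2*ε) + ε := h
      _ ≤ (α-1)^2/4 + ε*|1-α| + ε + 2^α*(2*ε) + ε := by linarith
      _ = (α-1)^2/4 + ε*(|1-α| + 2 + 2*2^α) := by ring
      _ = (α-1)^2/4 + ε*M := by rw [hM]
  linarith
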